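/- Let h > 0 and 0 ≤ s ≤ h. Let X be a square-integrable real random variable and let ζ be a real random variable with Gaussian law N(0, s) that is independent of X. Define the interpolated one-step value Y := X + s·f_h(X) + ζ·σ_h(X). Then E[Y²] = E[X²] − s·E[ X⁴/(1+h·X²)² ] + s·(s − 2h)·E[ X⁶/(1+h·X²)² ]; in particular, since s ≤ 2h, E[Y²] ≤ E[X²] − s·E[ X⁴/(1+h·X²)² ] ≤ E[X²]. -/

import Mathlib

open MeasureTheory ProbabilityTheory Real Filter Topology NNReal ENNReal

section GaussAux

lemma enkf_tend_exp {b : ℝ} (hb : 0 < b) :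
    Tendsto (fun x : ℝ => Real.exp (-b * x ^ 2)) atTop (𝓝 0) :=
  Real.tendsto_exp_atBot.comp
    ((tendsto_pow_atTop two_ne_zero).const_mul_atTop_of_neg (neg_lt_zero.2 hb))

lemma enkf_tend_exp_bot {b : ℝ} (hb : 0 < b) :
    Tendsto (fun x : ℝ => Real.exp (-b * x ^ 2)) atBot (𝓝 0) := by
  have := (enkf_tend_exp hb).comp tendsto_neg_atBot_atTop
  simpa [Function.comp_def] using this

lemma enkf_tend_mul_exp {b : ℝ} (hb : 0 < b) :
    Tendsto (fun x : ℝ => x * Real.exp (-b * x ^ 2)) atTop (𝓝 0) := by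
  have h1 := rpow_mul_exp_neg_mul_sq_isLittleO_exp_neg hb 1
  have h2 : Tendsto (fun x : ℝ => Real.exp (-(1/2) * x)) atTop (𝓝 0) :=
    Real.tendsto_exp_atBot.comp (tendsto_id.const_mul_atTop_of_neg (by norm_num))
  have h3 : Tendsto (fun x : ℝ => x ^ (1:ℝ) * Real.exp (-b * x ^ 2)) atTop (𝓝 0) :=
    h1.tendsto_zero_of_tendsto h2
  refine h3.congr' ?_
  filter_upwards [] with x
  rw [Real.rpow_one]

lemma enkf_tend_mul_exp_bot {b : ℝ} (hb : 0 < b) :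
    Tendsto (fun x : ℝ => x * Real.exp (-b * x ^ 2)) atBot (𝓝 0) := by
  have := ((enkf_tend_mul_exp hb).neg).comp tendsto_neg_atBot_atTop
  simpa [Function.comp_def] using this

lemma enkf_integrable_sq_mul_exp {b : ℝ} (hb : 0 < b) :
    Integrable fun x : ℝ => x ^ 2 * Real.exp (-b * x ^ 2) := by
  have := integrable_rpow_mul_exp_neg_mul_sq hb (s := 2) (by norm_num)
  refine this.congr (Filter.Eventually.of_forall fun x => ?_)
  have : (x : ℝ) ^ (2:ℝ) = x ^ (2:ℕ) := by
    rw [← Real.rpow_natCast x 2]; norm_num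
  simp only [this]

lemma enkf_gauss_mom1 {b : ℝ} (hb : 0 < b) :
    ∫ x : ℝ, x * Real.exp (-b * x ^ 2) = 0 := by
  have A : ∀ x : ℝ, HasDerivAt (fun y : ℝ => -(2*b)⁻¹ * Real.exp (-b * y ^ 2))
      (x * Real.exp (-b * x ^ 2)) x := by
    intro x
    have h1 : HasDerivAt (fun y : ℝ => -b * y ^ 2) (-b * (2 * x)) x := by
      simpa using ((hasDerivAt_pow 2 x).const_mul (-b))
    have := (h1.exp).const_mul (-(2*b)⁻¹)
    convert this using 1
    · rfl
    · rfl
    field_simp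
  have hbot : Tendsto (fun y : ℝ => -(2*b)⁻¹ * Real.exp (-b * y ^ 2)) atBot (𝓝 0) := by
    have := (enkf_tend_exp_bot hb).const_mul (-(2*b)⁻¹); simpa using this
  have htop : Tendsto (fun y : ℝ => -(2*b)⁻¹ * Real.exp (-b * y ^ 2)) atTop (𝓝 0) := by
    have := (enkf_tend_exp hb).const_mul (-(2*b)⁻¹); simpa using this
  have := integral_of_hasDerivAt_of_tendsto A (integrable_mul_exp_neg_mul_sq hb) hbot htop
  simpa using this

lemma enkf_gauss_mom2 {b : ℝ} (hb : 0 < b) :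
    ∫ x : ℝ, x ^ 2 * Real.exp (-b * x ^ 2) = (2*b)⁻¹ * Real.sqrt (π / b) := by
  have hb' : (2*b) ≠ 0 := by positivity
  have A : ∀ x : ℝ, HasDerivAt (fun y : ℝ => -(2*b)⁻¹ * (y * Real.exp (-b * y ^ 2)))
      (x ^ 2 * Real.exp (-b * x ^ 2) - (2*b)⁻¹ * Real.exp (-b * x ^ 2)) x := by
    intro x
    have h1 : HasDerivAt (fun y : ℝ => -b * y ^ 2) (-b * (2 * x)) x := by
      simpa using ((hasDerivAt_pow 2 x).const_mul (-b))
    have h2 := (hasDerivAt_id x).mul h1.exp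
    have := h2.const_mul (-(2*b)⁻¹)
    convert this using 1
    · rfl
    · rfl
    · rfl
    field_simp
    simp only [id]
    ring
  have hint : Integrable (fun x : ℝ =>
      x ^ 2 * Real.exp (-b * x ^ 2) - (2*b)⁻¹ * Real.exp (-b * x ^ 2)) :=
    (enkf_integrable_sq_mul_exp hb).sub ((integrable_exp_neg_mul_sq hb).const_mul _)
  have hbot : Tendsto (fun y : ℝ => -(2*b)⁻¹ * (y * Real.exp (-b * y ^ 2))) atBot (𝓝 0) := by
    have := (enkf_tend_mul_exp_bot hb).const_mul (-(2*b)⁻¹); simpa using this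
  have htop : Tendsto (fun y : ℝ => -(2*b)⁻¹ * (y * Real.exp (-b * y ^ 2))) atTop (𝓝 0) := by
    have := (enkf_tend_mul_exp hb).const_mul (-(2*b)⁻¹); simpa using this
  have hz := integral_of_hasDerivAt_of_tendsto A hint hbot htop
  rw [sub_zero] at hz
  rw [integral_sub (enkf_integrable_sq_mul_exp hb) ((integrable_exp_neg_mul_sq hb).const_mul _),
    integral_const_mul, integral_gaussian] at hz
  linarith

variable {v : ℝ≥0}

lemma enkf_gauss_transfer (hv : v ≠ 0) (g : ℝ → ℝ) :
    ∫ x, g x ∂(gaussianReal 0 v) = ∫ x, gaussianPDFReal 0 v x * g x := by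
  rw [gaussianReal_of_var_ne_zero 0 hv]
  have hd : gaussianPDF 0 v = fun x => ((gaussianPDFReal 0 v x).toNNReal : ℝ≥0∞) := rfl
  rw [hd, integral_withDensity_eq_integral_smul (measurable_gaussianPDFReal 0 v).real_toNNReal]
  congr 1
  funext x
  rw [NNReal.smul_def, smul_eq_mul, Real.coe_toNNReal _ (gaussianPDFReal_nonneg 0 v x)]

lemma enkf_gauss_transfer_integrable (hv : v ≠ 0) (g : ℝ → ℝ)
    (hg : Integrable fun x => gaussianPDFReal 0 v x * g x) :
    Integrable g (gaussianReal 0 v) := by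
  rw [gaussianReal_of_var_ne_zero 0 hv]
  have hd : gaussianPDF 0 v = fun x => ((gaussianPDFReal 0 v x).toNNReal : ℝ≥0∞) := rfl
  rw [hd, integrable_withDensity_iff_integrable_smul
    (measurable_gaussianPDFReal 0 v).real_toNNReal]
  refine hg.congr (Filter.Eventually.of_forall fun x => ?_)
  simp only [NNReal.smul_def, smul_eq_mul, Real.coe_toNNReal _ (gaussianPDFReal_nonneg 0 v x)]

lemma enkf_gauss_pdf_mul (g : ℝ → ℝ) :
    (fun x => gaussianPDFReal 0 v x * g x)
      = fun x => (Real.sqrt (2 * π * v))⁻¹ * (g x * Real.exp (-(2*(v:ℝ))⁻¹ * x ^ 2)) := by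
  funext x
  have harg : -(x - 0)^2/(2*(v:ℝ)) = -(2*(v:ℝ))⁻¹ * x^2 := by ring
  rw [gaussianPDFReal, harg]
  ring

lemma enkf_gauss_integrable_id : Integrable (fun x : ℝ => x) (gaussianReal 0 v) := by
  rcases eq_or_ne v 0 with rfl | hv
  · rw [gaussianReal_zero_var]
    exact ⟨measurable_id.aestronglyMeasurable, by simp [HasFiniteIntegral, lintegral_dirac]⟩
  · have hv' : (0:ℝ) < v := by exact_mod_cast pos_iff_ne_zero.mpr hv
    have hb : (0:ℝ) < (2*(v:ℝ))⁻¹ := by positivity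
    refine enkf_gauss_transfer_integrable hv _ ?_
    rw [enkf_gauss_pdf_mul]
    exact ((integrable_mul_exp_neg_mul_sq hb).const_mul _)

lemma enkf_gauss_integrable_sq : Integrable (fun x : ℝ => x ^ 2) (gaussianReal 0 v) := by
  rcases eq_or_ne v 0 with rfl | hv
  · rw [gaussianReal_zero_var]
    exact ⟨(measurable_id.pow_const 2).aestronglyMeasurable,
      by simp [HasFiniteIntegral, lintegral_dirac]⟩
  · have hv' : (0:ℝ) < v := by exact_mod_cast pos_iff_ne_zero.mpr hv
    have hb : (0:ℝ) < (2*(v:ℝ))⁻¹ := by positivity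
    refine enkf_gauss_transfer_integrable hv _ ?_
    rw [enkf_gauss_pdf_mul]
    exact ((enkf_integrable_sq_mul_exp hb).const_mul _)

lemma enkf_gauss_mean : ∫ x, x ∂(gaussianReal 0 v) = 0 := by
  rcases eq_or_ne v 0 with rfl | hv
  · rw [gaussianReal_zero_var, integral_dirac]
  · have hv' : (0:ℝ) < v := by exact_mod_cast pos_iff_ne_zero.mpr hv
    have hb : (0:ℝ) < (2*(v:ℝ))⁻¹ := by positivity
    rw [enkf_gauss_transfer hv, enkf_gauss_pdf_mul, integral_const_mul,
      enkf_gauss_mom1 hb, mul_zero]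

lemma enkf_gauss_second_moment : ∫ x, x ^ 2 ∂(gaussianReal 0 v) = v := by
  rcases eq_or_ne v 0 with rfl | hv
  · rw [gaussianReal_zero_var, integral_dirac]; norm_num
  · have hv' : (0:ℝ) < v := by exact_mod_cast pos_iff_ne_zero.mpr hv
    have hb : (0:ℝ) < (2*(v:ℝ))⁻¹ := by positivity
    rw [enkf_gauss_transfer hv, enkf_gauss_pdf_mul, integral_const_mul, enkf_gauss_mom2 hb]
    have h1 : (2 * (2*(v:ℝ))⁻¹)⁻¹ = (v:ℝ) := by field_simp
    have h2 : π / (2*(v:ℝ))⁻¹ = 2 * π * v := by field_simp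
    rw [h1, h2]
    have h3 : Real.sqrt (2 * π * v) ≠ 0 := by
      refine Real.sqrt_ne_zero'.mpr ?_
      positivity
    field_simp

end GaussAux

set_option maxHeartbeats 1600000 in
/-- One-step second-moment computation for the continuous-time interpolation of the tamed
Euler–Maruyama scheme: for `Y = X + s·f_h(X) + ζ·σ_h(X)` with `f_h(x) = -x³/(1+hx²)`,
`σ_h(x) = x²/(1+hx²)`, `ζ ~ N(0,s)` independent of `X`, and `0 ≤ s ≤ h`,
`E[Y²] = E[X²] - s·E[X⁴/(1+hX²)²] + s(s-2h)·E[X⁶/(1+hX²)²]`; in particular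
`E[Y²] ≤ E[X²] - s·E[X⁴/(1+hX²)²] ≤ E[X²]`. -/
theorem enkf_interpolation_one_step_second_moment
    {Ω : Type*} [MeasurableSpace Ω] (μ : Measure Ω) [IsProbabilityMeasure μ]
    (h s : ℝ) (hh : 0 < h) (hs0 : 0 ≤ s) (hsh : s ≤ h)
    (X ζ : Ω → ℝ) (hXm : Measurable X) (hζm : Measurable ζ)
    (hXL2 : MemLp X 2 μ)
    (hlaw : Measure.map ζ μ = gaussianReal 0 s.toNNReal)
    (hindep : IndepFun ζ X μ)
    (Y : Ω → ℝ)
    (hY : Y = fun ω => X ω + s * (-(X ω) ^ 3 / (1 + h * (X ω) ^ 2))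
        + ζ ω * ((X ω) ^ 2 / (1 + h * (X ω) ^ 2))) :
    (∫ ω, (Y ω) ^ 2 ∂μ
      = (∫ ω, (X ω) ^ 2 ∂μ) - s * ∫ ω, (X ω) ^ 4 / (1 + h * (X ω) ^ 2) ^ 2 ∂μ
        + s * (s - 2 * h) * ∫ ω, (X ω) ^ 6 / (1 + h * (X ω) ^ 2) ^ 2 ∂μ)
    ∧ (∫ ω, (Y ω) ^ 2 ∂μ
        ≤ (∫ ω, (X ω) ^ 2 ∂μ) - s * ∫ ω, (X ω) ^ 4 / (1 + h * (X ω) ^ 2) ^ 2 ∂μ)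
    ∧ (∫ ω, (Y ω) ^ 2 ∂μ ≤ ∫ ω, (X ω) ^ 2 ∂μ) := by
  -- notation
  have hdpos : ∀ ω, 0 < 1 + h * X ω ^ 2 := by
    intro ω
    have := mul_nonneg hh.le (sq_nonneg (X ω))
    linarith
  have hdposx : ∀ x : ℝ, 0 < 1 + h * x ^ 2 := by
    intro x
    have := mul_nonneg hh.le (sq_nonneg x)
    linarith
  -- law of ζ
  have hst : ((s.toNNReal : ℝ≥0) : ℝ) = s := Real.coe_toNNReal s hs0
  have hζ1 : Integrable ζ μ := by
    have h0 : Integrable (fun x : ℝ => x) (Measure.map ζ μ) := by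
      rw [hlaw]; exact enkf_gauss_integrable_id
    exact (integrable_map_measure measurable_id.aestronglyMeasurable hζm.aemeasurable).mp h0
  have hζ2 : Integrable (fun ω => ζ ω ^ 2) μ := by
    have h0 : Integrable (fun x : ℝ => x ^ 2) (Measure.map ζ μ) := by
      rw [hlaw]; exact enkf_gauss_integrable_sq
    exact (integrable_map_measure (measurable_id.pow_const 2).aestronglyMeasurable
      hζm.aemeasurable).mp h0
  have hEζ : ∫ ω, ζ ω ∂μ = 0 := by
    have := integral_map (μ := μ) hζm.aemeasurable
      (f := fun x : ℝ => x) measurable_id.aestronglyMeasurable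
    rw [← this, hlaw, enkf_gauss_mean]
  have hEζ2 : ∫ ω, ζ ω ^ 2 ∂μ = s := by
    have := integral_map (μ := μ) hζm.aemeasurable
      (f := fun x : ℝ => x ^ 2) (measurable_id.pow_const 2).aestronglyMeasurable
    rw [← this, hlaw, enkf_gauss_second_moment, hst]
  -- measurability of auxiliary real functions
  have mDr : Measurable fun x : ℝ => 1 + h * x ^ 2 :=
    measurable_const.add ((measurable_id.pow_const 2).const_mul h)
  have mA : Measurable fun x : ℝ => x + s * (-x ^ 3 / (1 + h * x ^ 2)) :=
    measurable_id.add ((((measurable_id.pow_const 3).neg).div mDr).const_mul s)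
  have mG : Measurable fun x : ℝ => x ^ 2 / (1 + h * x ^ 2) :=
    (measurable_id.pow_const 2).div mDr
  set A : Ω → ℝ := fun ω => X ω + s * (-(X ω) ^ 3 / (1 + h * X ω ^ 2)) with hA
  set G : Ω → ℝ := fun ω => X ω ^ 2 / (1 + h * X ω ^ 2) with hG
  -- integrability of functions of X
  have hX2 : Integrable (fun ω => X ω ^ 2) μ := hXL2.integrable_sq
  have hXabs : Integrable (fun ω => |X ω|) μ := (hXL2.integrable one_le_two).abs
  have hI4' : Integrable (fun ω => X ω ^ 4 / (1 + h * X ω ^ 2) ^ 2) μ := by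
    refine Integrable.mono' (hX2.div_const h)
      (((hXm.pow_const 4).div ((measurable_const.add
        ((hXm.pow_const 2).const_mul h)).pow_const 2)).aestronglyMeasurable) ?_
    filter_upwards [] with ω
    have hd := hdpos ω
    rw [Real.norm_eq_abs, abs_of_nonneg (by positivity)]
    rw [div_le_div_iff₀ (by positivity) hh]
    nlinarith [sq_nonneg (X ω), sq_nonneg (X ω ^ 2), mul_nonneg hh.le (pow_nonneg (sq_nonneg (X ω)) 2),
      mul_nonneg hh.le (sq_nonneg (X ω)), sq_nonneg (X ω ^ 3)]
  have hI6 : Integrable (fun ω => X ω ^ 6 / (1 + h * X ω ^ 2) ^ 2) μ := by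
    refine Integrable.mono' (hX2.div_const (h ^ 2))
      (((hXm.pow_const 6).div ((measurable_const.add
        ((hXm.pow_const 2).const_mul h)).pow_const 2)).aestronglyMeasurable) ?_
    filter_upwards [] with ω
    have hd := hdpos ω
    rw [Real.norm_eq_abs, abs_of_nonneg (by positivity)]
    rw [div_le_div_iff₀ (by positivity) (by positivity)]
    nlinarith [sq_nonneg (X ω), sq_nonneg (X ω ^ 2), sq_nonneg (X ω ^ 3),
      mul_nonneg hh.le (sq_nonneg (X ω ^ 2)), mul_nonneg hh.le (sq_nonneg (X ω))]
  have hI4 : Integrable (fun ω => X ω ^ 4 / (1 + h * X ω ^ 2)) μ := by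
    refine Integrable.mono' (hX2.div_const h)
      (((hXm.pow_const 4).div (measurable_const.add
        ((hXm.pow_const 2).const_mul h))).aestronglyMeasurable) ?_
    filter_upwards [] with ω
    have hd := hdpos ω
    rw [Real.norm_eq_abs, abs_of_nonneg (by positivity)]
    rw [div_le_div_iff₀ (by positivity) hh]
    nlinarith [sq_nonneg (X ω), sq_nonneg (X ω ^ 2), mul_nonneg hh.le (sq_nonneg (X ω))]
  -- pointwise bounds for A and G
  have hA2le : ∀ ω, A ω ^ 2 ≤ X ω ^ 2 := by
    intro ω
    have hd := hdpos ω
    have ht0 : 0 ≤ s * X ω ^ 2 / (1 + h * X ω ^ 2) := by positivity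
    have ht1 : s * X ω ^ 2 / (1 + h * X ω ^ 2) ≤ 1 := by
      rw [div_le_one hd]
      nlinarith [mul_le_mul_of_nonneg_right hsh (sq_nonneg (X ω))]
    have hAeq : A ω = X ω * (1 - s * X ω ^ 2 / (1 + h * X ω ^ 2)) := by
      rw [hA]
      field_simp
      ring
    have h1t : (1 - s * X ω ^ 2 / (1 + h * X ω ^ 2)) ^ 2 ≤ 1 := by nlinarith
    calc A ω ^ 2 = X ω ^ 2 * (1 - s * X ω ^ 2 / (1 + h * X ω ^ 2)) ^ 2 := by
          rw [hAeq, mul_pow]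
      _ ≤ X ω ^ 2 * 1 := mul_le_mul_of_nonneg_left h1t (sq_nonneg _)
      _ = X ω ^ 2 := mul_one _
  have hAabs : ∀ ω, |A ω| ≤ |X ω| := by
    intro ω
    rw [← Real.sqrt_sq_eq_abs, ← Real.sqrt_sq_eq_abs]
    exact Real.sqrt_le_sqrt (hA2le ω)
  have hGabs : ∀ ω, |G ω| ≤ 1 / h := by
    intro ω
    have hd := hdpos ω
    rw [hG, abs_of_nonneg (by positivity), div_le_div_iff₀ hd hh]
    nlinarith
  -- integrability of the three parts
  have hIA2 : Integrable (fun ω => A ω ^ 2) μ := by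
    refine Integrable.mono' hX2 ((mA.comp hXm).pow_const 2).aestronglyMeasurable ?_
    filter_upwards [] with ω
    rw [Real.norm_eq_abs, abs_of_nonneg (sq_nonneg _)]
    exact hA2le ω
  have hIAg : Integrable (fun ω => 2 * A ω * G ω) μ := by
    refine Integrable.mono' (hXabs.const_mul (2 * (1 / h)))
      (((mA.comp hXm).const_mul 2).mul (mG.comp hXm)).aestronglyMeasurable ?_
    filter_upwards [] with ω
    rw [Real.norm_eq_abs, abs_mul, abs_mul, abs_two]
    calc 2 * |A ω| * |G ω| ≤ 2 * |X ω| * (1 / h) := by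
          refine mul_le_mul ?_ (hGabs ω) (abs_nonneg _) (by positivity)
          exact mul_le_mul_of_nonneg_left (hAabs ω) (by norm_num)
      _ = 2 * (1 / h) * |X ω| := by ring
  have hIG2 : Integrable (fun ω => G ω ^ 2) μ := by
    refine Integrable.mono' (integrable_const ((1 / h) ^ 2))
      ((mG.comp hXm).pow_const 2).aestronglyMeasurable ?_
    filter_upwards [] with ω
    rw [Real.norm_eq_abs, abs_of_nonneg (sq_nonneg _), ← sq_abs]
    exact pow_le_pow_left₀ (abs_nonneg _) (hGabs ω) 2
  -- independence
  have ind1 : IndepFun ζ (fun ω => 2 * A ω * G ω) μ := by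
    have := hindep.comp measurable_id
      ((mA.const_mul 2).mul mG)
    exact this
  have ind2 : IndepFun (fun ω => ζ ω ^ 2) (fun ω => G ω ^ 2) μ := by
    have := hindep.comp (measurable_id.pow_const 2) (mG.pow_const 2)
    exact this
  -- product integrals
  have hP1 : Integrable (fun ω => ζ ω * (2 * A ω * G ω)) μ :=
    ind1.integrable_mul hζ1 hIAg
  have hP2 : Integrable (fun ω => ζ ω ^ 2 * G ω ^ 2) μ :=
    ind2.integrable_mul hζ2 hIG2
  have hE1 : ∫ ω, ζ ω * (2 * A ω * G ω) ∂μ = 0 := by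
    have := ind1.integral_mul_eq_mul_integral hζ1.aestronglyMeasurable hIAg.aestronglyMeasurable
    calc ∫ ω, ζ ω * (2 * A ω * G ω) ∂μ
        = (∫ ω, ζ ω ∂μ) * ∫ ω, 2 * A ω * G ω ∂μ := this
      _ = 0 := by rw [hEζ, zero_mul]
  have hE2 : ∫ ω, ζ ω ^ 2 * G ω ^ 2 ∂μ = s * ∫ ω, G ω ^ 2 ∂μ := by
    have := ind2.integral_mul_eq_mul_integral hζ2.aestronglyMeasurable hIG2.aestronglyMeasurable
    calc ∫ ω, ζ ω ^ 2 * G ω ^ 2 ∂μ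
        = (∫ ω, ζ ω ^ 2 ∂μ) * ∫ ω, G ω ^ 2 ∂μ := this
      _ = s * ∫ ω, G ω ^ 2 ∂μ := by rw [hEζ2]
  -- decompose Y²
  have hYsq : (fun ω => Y ω ^ 2)
      = fun ω => (A ω ^ 2 + ζ ω * (2 * A ω * G ω)) + ζ ω ^ 2 * G ω ^ 2 := by
    funext ω
    rw [hY, hA, hG]
    ring
  have hEY : ∫ ω, Y ω ^ 2 ∂μ
      = (∫ ω, A ω ^ 2 ∂μ) + s * ∫ ω, G ω ^ 2 ∂μ := by
    have hsum : Integrable (fun ω => A ω ^ 2 + ζ ω * (2 * A ω * G ω)) μ := hIA2.add hP1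
    rw [hYsq, integral_add hsum hP2, integral_add hIA2 hP1, hE1, hE2, add_zero]
  -- expand A²
  have hA2exp : ∫ ω, A ω ^ 2 ∂μ
      = (∫ ω, X ω ^ 2 ∂μ) - 2 * s * (∫ ω, X ω ^ 4 / (1 + h * X ω ^ 2) ∂μ)
        + s ^ 2 * ∫ ω, X ω ^ 6 / (1 + h * X ω ^ 2) ^ 2 ∂μ := by
    have hpt : (fun ω => A ω ^ 2)
        = fun ω => X ω ^ 2 - 2 * s * (X ω ^ 4 / (1 + h * X ω ^ 2))
          + s ^ 2 * (X ω ^ 6 / (1 + h * X ω ^ 2) ^ 2) := by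
      funext ω
      have hd := (hdpos ω).ne'
      rw [hA]
      field_simp
      ring
    have hs1 : Integrable (fun ω => X ω ^ 2 - 2 * s * (X ω ^ 4 / (1 + h * X ω ^ 2))) μ :=
      hX2.sub (hI4.const_mul (2 * s))
    rw [hpt, integral_add hs1 (hI6.const_mul (s ^ 2)),
      integral_sub hX2 (hI4.const_mul (2 * s)), integral_const_mul, integral_const_mul]
  -- split X⁴/(1+hX²)
  have hsplit : ∫ ω, X ω ^ 4 / (1 + h * X ω ^ 2) ∂μ
      = (∫ ω, X ω ^ 4 / (1 + h * X ω ^ 2) ^ 2 ∂μ)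
        + h * ∫ ω, X ω ^ 6 / (1 + h * X ω ^ 2) ^ 2 ∂μ := by
    have hpt : (fun ω => X ω ^ 4 / (1 + h * X ω ^ 2))
        = fun ω => X ω ^ 4 / (1 + h * X ω ^ 2) ^ 2
          + h * (X ω ^ 6 / (1 + h * X ω ^ 2) ^ 2) := by
      funext ω
      have hd := (hdpos ω).ne'
      field_simp
    rw [hpt, integral_add hI4' (hI6.const_mul h), integral_const_mul]
  -- G² = X⁴/(1+hX²)²
  have hGsq : ∫ ω, G ω ^ 2 ∂μ = ∫ ω, X ω ^ 4 / (1 + h * X ω ^ 2) ^ 2 ∂μ := by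
    congr 1
    funext ω
    rw [hG, div_pow]
    ring
  have hI4nn : 0 ≤ ∫ ω, X ω ^ 4 / (1 + h * X ω ^ 2) ^ 2 ∂μ :=
    integral_nonneg fun ω => by positivity
  have hI6nn : 0 ≤ ∫ ω, X ω ^ 6 / (1 + h * X ω ^ 2) ^ 2 ∂μ :=
    integral_nonneg fun ω => by positivity
  have hmain : ∫ ω, Y ω ^ 2 ∂μ
      = (∫ ω, X ω ^ 2 ∂μ) - s * ∫ ω, X ω ^ 4 / (1 + h * X ω ^ 2) ^ 2 ∂μ
        + s * (s - 2 * h) * ∫ ω, X ω ^ 6 / (1 + h * X ω ^ 2) ^ 2 ∂μ := by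
    rw [hEY, hA2exp, hsplit, hGsq]
    ring
  have hneg : s * (s - 2 * h) * ∫ ω, X ω ^ 6 / (1 + h * X ω ^ 2) ^ 2 ∂μ ≤ 0 :=
    mul_nonpos_of_nonpos_of_nonneg
      (mul_nonpos_of_nonneg_of_nonpos hs0 (by linarith)) hI6nn
  have hpos : 0 ≤ s * ∫ ω, X ω ^ 4 / (1 + h * X ω ^ 2) ^ 2 ∂μ := mul_nonneg hs0 hI4nn
  exact ⟨hmain, by rw [hmain]; linarith, by rw [hmain]; linarith⟩
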